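/- Let m, J > 0, d > 0, ψ ∈ ℝ, and define the post-collisional map on ℝ⁶ (with coordinates V = (v, v̄, ω, ω̄), v, v̄ ∈ ℝ², ω, ω̄ ∈ ℝ) by: letting u = (m d (v − v̄) − 2J(ω + ω̄) e(ψ)^⊥)·e(ψ)^⊥ and K = m d² + 4J, set v' = v̄ + (d/K) u e(ψ)^⊥, v̄' = v − (d/K) u e(ψ)^⊥, ω' = −ω − (2/K) u, ω̄' = −ω̄ − (2/K) u. Then this map conserves linear momentum (m v' + m v̄' = m v + m v̄) and kinetic energy (m|v'|² + J ω'² + m|v̄'|² + J ω̄'² = m|v|² + J ω² + m|v̄|² + J ω̄²). -/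
import Mathlib

open Matrix Real

/-- The 'second' scattering map, given componentwise (with
`e(ψ)^⊥ = (−sin ψ, cos ψ)`, `u = (md(v − v̄) − 2J(ω + ω̄)e(ψ)^⊥)·e(ψ)^⊥`,
`K = md² + 4J`) by `v' = v̄ + (d/K)u e(ψ)^⊥`, `v̄' = v − (d/K)u e(ψ)^⊥`,
`ω' = −ω − (2/K)u`, `ω̄' = −ω̄ − (2/K)u`, conserves linear momentum and kinetic
energy. -/
theorem stmt15 (m J d ψ : ℝ) (hm : 0 < m) (hJ : 0 < J) (hd : 0 < d)
    (v vbar : Fin 2 → ℝ) (ω ωbar : ℝ)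
    (eperp : Fin 2 → ℝ) (heperp : eperp = ![-Real.sin ψ, Real.cos ψ])
    (u K : ℝ)
    (hu : u = ((m * d) • (v - vbar) - (2 * J * (ω + ωbar)) • eperp) ⬝ᵥ eperp)
    (hK : K = m * d ^ 2 + 4 * J)
    (v' vbar' : Fin 2 → ℝ) (ω' ωbar' : ℝ)
    (hv' : v' = vbar + (d / K * u) • eperp)
    (hvbar' : vbar' = v - (d / K * u) • eperp)
    (hω' : ω' = -ω - 2 / K * u)
    (hωbar' : ωbar' = -ωbar - 2 / K * u) :
    m • v' + m • vbar' = m • v + m • vbar ∧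
    m * (v' ⬝ᵥ v') + J * ω' ^ 2 + m * (vbar' ⬝ᵥ vbar') + J * ωbar' ^ 2 =
      m * (v ⬝ᵥ v) + J * ω ^ 2 + m * (vbar ⬝ᵥ vbar) + J * ωbar ^ 2 := by
  have hKpos : 0 < K := by nlinarith
  have hK0 : K ≠ 0 := ne_of_gt hKpos
  have he : eperp ⬝ᵥ eperp = 1 := by
    simp [heperp, dotProduct, Fin.sum_univ_two]
    nlinarith [sin_sq_add_cos_sq ψ]
  have hu' : u = m * d * (v ⬝ᵥ eperp) - m * d * (vbar ⬝ᵥ eperp)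
      - 2 * J * (ω + ωbar) := by
    rw [hu]
    simp only [sub_dotProduct, smul_dotProduct, sub_dotProduct, smul_eq_mul, he]
    simp [sub_dotProduct]
    ring
  clear hu
  constructor
  · subst hv' hvbar'
    funext i
    simp [Pi.add_apply, Pi.smul_apply]
    ring
  · subst hv' hvbar' hω' hωbar'
    have hc1 : eperp ⬝ᵥ vbar = vbar ⬝ᵥ eperp := dotProduct_comm _ _
    have hc2 : eperp ⬝ᵥ v = v ⬝ᵥ eperp := dotProduct_comm _ _
    simp only [dotProduct_add, add_dotProduct, dotProduct_sub, sub_dotProduct,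
      smul_dotProduct, dotProduct_smul, smul_eq_mul, he, hc1, hc2]
    subst hK
    have hKinv : (m * d ^ 2 + 4 * J)⁻¹ * (m * d ^ 2 + 4 * J) = 1 :=
      inv_mul_cancel₀ hK0
    linear_combination (2 * u / (m * d ^ 2 + 4 * J)) * hu' +
      (2 * u ^ 2 * (m * d ^ 2 + 4 * J)⁻¹) * hKinv
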